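/- For k ∈ (0,1) and K_a with |K_a| = (1-k^2)k^{2k^2/(1-k^2)}, the equation sign(v)(1 - v^2)|v|^{2k^2/(1-k^2)} = K_a has exactly one solution in [-1,1], namely v = k if K_a > 0 and v = -k if K_a < 0. -/

import Mathlib

noncomputable def gfun (k v : ℝ) : ℝ :=
  Real.sign v * (1 - v^2) * |v| ^ (2*k^2/(1-k^2))

namespace Stmt9Aux

noncomputable def hfun (k v : ℝ) : ℝ := (1 - v^2) * v ^ (2*k^2/(1-k^2))

variable {k : ℝ}

lemma one_sub_sq_pos (hk : k ∈ Set.Ioo (0:ℝ) 1) : 0 < 1 - k^2 := by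
  nlinarith [hk.1, hk.2]

lemma alpha_pos (hk : k ∈ Set.Ioo (0:ℝ) 1) : 0 < 2*k^2/(1-k^2) := by
  have h1 := one_sub_sq_pos hk
  have hk0 : k ≠ 0 := hk.1.ne'
  positivity

lemma hasDerivAt_hfun (hk : k ∈ Set.Ioo (0:ℝ) 1) {x : ℝ} (hx : x ≠ 0) :
    HasDerivAt (hfun k) ((2/(1-k^2)) * (k^2 - x^2) * x ^ (2*k^2/(1-k^2) - 1)) x := by
  have h1 : HasDerivAt (fun v : ℝ => 1 - v^2) (-(2*x)) x := by
    simpa using ((hasDerivAt_pow 2 x).const_sub 1)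
  have h2 : HasDerivAt (fun v : ℝ => v ^ (2*k^2/(1-k^2)))
      ((2*k^2/(1-k^2)) * x ^ (2*k^2/(1-k^2) - 1)) x :=
    Real.hasDerivAt_rpow_const (Or.inl hx)
  have := h1.mul h2
  refine this.congr_deriv ?_
  have hxp : x ^ (2*k^2/(1-k^2)) = x ^ (2*k^2/(1-k^2) - 1) * x := by
    rw [← Real.rpow_add_one hx]; ring_nf
  rw [hxp]
  have hk2 : (1 - k^2) ≠ 0 := (one_sub_sq_pos hk).ne'
  field_simp
  ring

lemma continuousOn_hfun (hk : k ∈ Set.Ioo (0:ℝ) 1) : Continuous (hfun k) := by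
  apply Continuous.mul (by continuity)
  exact continuous_iff_continuousAt.2 fun x =>
    Real.continuousAt_rpow_const x _ (Or.inr (alpha_pos hk).le)

lemma strictMonoOn_hfun (hk : k ∈ Set.Ioo (0:ℝ) 1) :
    StrictMonoOn (hfun k) (Set.Icc 0 k) := by
  apply strictMonoOn_of_deriv_pos (convex_Icc 0 k) (continuousOn_hfun hk).continuousOn
  intro x hx
  rw [interior_Icc] at hx
  have hd := hasDerivAt_hfun hk (x := x) (ne_of_gt hx.1)
  rw [hd.deriv]
  have h1 : 0 < 2/(1-k^2) := by have := one_sub_sq_pos hk; positivity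
  have h2 : 0 < k^2 - x^2 := by nlinarith [hx.1, hx.2]
  have h3 : (0:ℝ) < x ^ (2*k^2/(1-k^2) - 1) := Real.rpow_pos_of_pos hx.1 _
  positivity

lemma strictAntiOn_hfun (hk : k ∈ Set.Ioo (0:ℝ) 1) :
    StrictAntiOn (hfun k) (Set.Icc k 1) := by
  apply strictAntiOn_of_deriv_neg (convex_Icc k 1) (continuousOn_hfun hk).continuousOn
  intro x hx
  rw [interior_Icc] at hx
  have hk0 := hk.1
  have hx0 : 0 < x := lt_trans hk0 hx.1
  have hd := hasDerivAt_hfun hk (x := x) (ne_of_gt hx0)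
  rw [hd.deriv]
  have h1 : 0 < 2/(1-k^2) := by have := one_sub_sq_pos hk; positivity
  have h2 : k^2 - x^2 < 0 := by nlinarith [hx.1, hx.2]
  have h3 : (0:ℝ) < x ^ (2*k^2/(1-k^2) - 1) := Real.rpow_pos_of_pos hx0 _
  exact mul_neg_of_neg_of_pos (mul_neg_of_pos_of_neg h1 h2) h3

lemma hfun_lt (hk : k ∈ Set.Ioo (0:ℝ) 1) {v : ℝ} (hv : v ∈ Set.Icc (0:ℝ) 1)
    (hne : v ≠ k) : hfun k v < hfun k k := by
  rcases lt_or_gt_of_ne hne with h | h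
  · exact strictMonoOn_hfun hk ⟨hv.1, h.le⟩ ⟨hk.1.le, le_refl _⟩ h
  · exact strictAntiOn_hfun hk ⟨le_refl _, hk.2.le⟩ ⟨h.le, hv.2⟩ h

lemma hfun_k_pos (hk : k ∈ Set.Ioo (0:ℝ) 1) : 0 < hfun k k := by
  have h1 := one_sub_sq_pos hk
  have h2 : (0:ℝ) < k ^ (2*k^2/(1-k^2)) := Real.rpow_pos_of_pos hk.1 _
  exact mul_pos h1 h2

lemma gfun_eq_hfun {v : ℝ} (hv : 0 < v) : gfun k v = hfun k v := by
  rw [gfun, hfun, Real.sign_of_pos hv, abs_of_pos hv, one_mul]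

lemma gfun_neg (v : ℝ) : gfun k (-v) = - gfun k v := by
  unfold gfun
  rw [Real.sign_neg, abs_neg]
  ring_nf

end Stmt9Aux

open Stmt9Aux in
/-- For `k ∈ (0,1)` and `Kₐ` with `|Kₐ| = (1-k²)k^{2k²/(1-k²)}`, the equation
`g(v) = Kₐ` has exactly one solution in `[-1,1]`: `v = k` if `Kₐ > 0`, `v = -k`
if `Kₐ < 0`. -/
theorem stmt9 (k Ka : ℝ) (hk : k ∈ Set.Ioo (0:ℝ) 1)
    (hKa : |Ka| = (1 - k^2) * k ^ (2*k^2/(1-k^2))) :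
    (∃! v : ℝ, v ∈ Set.Icc (-1 : ℝ) 1 ∧ gfun k v = Ka) ∧
    (0 < Ka → gfun k k = Ka) ∧
    (Ka < 0 → gfun k (-k) = Ka) := by
  have hhk : |Ka| = hfun k k := hKa
  have hKa0 : Ka ≠ 0 := by
    intro h; rw [h, abs_zero] at hhk
    exact absurd hhk.symm (hfun_k_pos hk).ne'
  have hgk : gfun k k = hfun k k := gfun_eq_hfun hk.1
  have hkmem : k ∈ Set.Icc (-1:ℝ) 1 := ⟨by linarith [hk.1], hk.2.le⟩
  have key_pos : 0 < Ka → gfun k k = Ka := fun hpos => by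
    rw [hgk, ← hhk, abs_of_pos hpos]
  have key_neg : Ka < 0 → gfun k (-k) = Ka := fun hneg => by
    rw [gfun_neg, hgk, ← hhk, abs_of_neg hneg, neg_neg]
  -- uniqueness helper: any solution with Ka > 0 equals k
  refine ⟨?_, key_pos, key_neg⟩
  rcases lt_or_gt_of_ne hKa0 with hneg | hpos
  · -- Ka < 0, solution is -k
    refine ⟨-k, ⟨⟨by linarith [hk.2], by linarith [hk.1]⟩, key_neg hneg⟩, ?_⟩
    rintro v ⟨hv, hgv⟩
    have hvneg : v < 0 := by
      by_contra hvn
      push_neg at hvn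
      have hs : 0 ≤ Real.sign v := by
        rcases eq_or_lt_of_le hvn with h0 | h0
        · simp [← h0]
        · simp [Real.sign_of_pos h0]
      have h1 : 0 ≤ 1 - v^2 := by nlinarith [hv.2]
      have h2 : (0:ℝ) ≤ |v| ^ (2*k^2/(1-k^2)) := Real.rpow_nonneg (abs_nonneg v) _
      have hge : 0 ≤ gfun k v := by
        rw [gfun]
        exact mul_nonneg (mul_nonneg hs h1) h2
      linarith [hgv ▸ hge]
    have hveq : hfun k (-v) = hfun k k := by
      have : gfun k (-v) = -Ka := by rw [gfun_neg, hgv]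
      rw [← gfun_eq_hfun (by linarith : (0:ℝ) < -v), this, ← hhk, abs_of_neg hneg]
    by_contra hne
    have hvne : -v ≠ k := fun h => hne (by linarith [neg_eq_iff_eq_neg.mp h])
    have := hfun_lt hk (v := -v) ⟨by linarith, by linarith [hv.1]⟩ hvne
    rw [hveq] at this; exact lt_irrefl _ this
  · -- Ka > 0, solution is k
    refine ⟨k, ⟨hkmem, key_pos hpos⟩, ?_⟩
    rintro v ⟨hv, hgv⟩
    have hvpos : 0 < v := by
      by_contra hvn
      push_neg at hvn
      have hs : Real.sign v ≤ 0 := by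
        rcases eq_or_lt_of_le hvn with h0 | h0
        · simp [h0]
        · simp [Real.sign_of_neg h0]
      have h1 : 0 ≤ 1 - v^2 := by nlinarith [hv.1]
      have h2 : (0:ℝ) ≤ |v| ^ (2*k^2/(1-k^2)) := Real.rpow_nonneg (abs_nonneg v) _
      have hle : gfun k v ≤ 0 := by
        rw [gfun]
        exact mul_nonpos_of_nonpos_of_nonneg (mul_nonpos_of_nonpos_of_nonneg hs h1) h2
      linarith [hgv ▸ hle]
    have hveq : hfun k v = hfun k k := by
      rw [← gfun_eq_hfun hvpos, hgv, ← hhk, abs_of_pos hpos]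
    by_contra hne
    have := hfun_lt hk (v := v) ⟨hvpos.le, hv.2⟩ hne
    rw [hveq] at this; exact lt_irrefl _ this
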